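/- Every full-correlator box is no-signaling: for every n ≥ 1 and every function ε : {-1,+1}^n → [-1,1], the function x : S^n → ℝ defined by x^s = ε(s) if all s_j ∈ {-1,+1}, x^{0…0} = 1, and x^s = 0 for all other s, lies in the no-signaling cone NS_n. -/

import Mathlib

open Finset

noncomputable section

/-- The dual cone of a set of real-valued functions on a finite index set. -/
def dualCone {I : Type*} [Fintype I] (C : Set (I → ℝ)) : Set (I → ℝ) :=
  {g | ∀ x ∈ C, 0 ≤ ∑ i, g i * x i}

/-- The convex cone generated by a set: all finite nonnegative linear combinations. -/
def coneHull {E : Type*} [AddCommMonoid E] [Module ℝ E] (X : Set E) : Set E :=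
  {y | ∃ (m : ℕ) (c : Fin m → ℝ) (v : Fin m → E),
    (∀ i, 0 ≤ c i) ∧ (∀ i, v i ∈ X) ∧ y = ∑ i, c i • v i}

/-- The square cone `Sq ⊆ ℝ^S`, where `S = {-1,0,+1}` is `SignType`. -/
def Sq : Set (SignType → ℝ) :=
  {x | -x 0 ≤ x (-1) ∧ x (-1) ≤ x 0 ∧ -x 0 ≤ x 1 ∧ x 1 ≤ x 0}

/-- `hF v t s = h_v(t,s)`: equals `t` if `v = s`, `1` if `v = 0`, and `0` if `v = -s`. -/
def hF (v t s : SignType) : ℝ := if v = s then (t : ℝ) else if v = 0 then 1 else 0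

/-- The no-signaling cone `NS_n`. -/
def NS (n : ℕ) : Set ((Fin n → SignType) → ℝ) :=
  {x | ∀ s t : Fin n → SignType, (∀ j, s j ≠ 0) → (∀ j, t j ≠ 0) →
    0 ≤ ∑ v : Fin n → SignType, (∏ j, hF (v j) (t j) (s j)) * x v}

/-- Local deterministic strategies: `a j 0 = 1` and `a j (±1) ∈ {-1,+1}`. -/
def IsDet {n : ℕ} (a : Fin n → SignType → ℝ) : Prop :=
  ∀ j, a j 0 = 1 ∧ (a j (-1) = -1 ∨ a j (-1) = 1) ∧ (a j 1 = -1 ∨ a j 1 = 1)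

/-- The Bell cone `B_n`: the convex cone generated by the local deterministic points. -/
def Bell (n : ℕ) : Set ((Fin n → SignType) → ℝ) :=
  coneHull {x | ∃ a : Fin n → SignType → ℝ, IsDet a ∧ x = fun s => ∏ j, a j (s j)}

/-- The tensor `F_{st}` (lowered indices). -/
def Flo (s t : SignType) : ℝ :=
  if s = 0 then (if t = 0 then 1 else 0)
  else if t = 0 then 0
  else if s = 1 ∧ t = 1 then -(1/2) else 1/2

/-- The tensor `F^{st}` (raised indices). -/
def Fup (s t : SignType) : ℝ :=
  if s = 0 then (if t = 0 then 1 else 0)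
  else if t = 0 then 0
  else if s = 1 ∧ t = 1 then -1 else 1

/-- Every full-correlator box, with arbitrary full correlators in `[-1,1]`, normalization `1`
and vanishing marginal correlators, is no-signaling. -/
theorem statement14 (n : ℕ) (hn : 1 ≤ n) (ε : (Fin n → SignType) → ℝ)
    (hε : ∀ s : Fin n → SignType, (∀ j, s j ≠ 0) → -1 ≤ ε s ∧ ε s ≤ 1) :
    (fun v : Fin n → SignType =>
      if ∀ j, v j ≠ 0 then ε v
      else if v = fun _ => 0 then 1 else 0) ∈ NS n := by
  intro s t hs ht
  set x : (Fin n → SignType) → ℝ := fun v =>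
      if ∀ j, v j ≠ 0 then ε v
      else if v = fun _ => 0 then 1 else 0 with hx
  set c0 : Fin n → SignType := fun _ => 0 with hc0
  have j0 : Fin n := ⟨0, hn⟩
  have hsne : s ≠ c0 := by
    intro h
    exact hs j0 (by rw [h])
  have key : ∑ v : Fin n → SignType, (∏ j, hF (v j) (t j) (s j)) * x v
      = (∏ j, ((t j : ℤ) : ℝ)) * ε s + 1 := by
    have hsub : ∑ v : Fin n → SignType, (∏ j, hF (v j) (t j) (s j)) * x v
        = ∑ v ∈ ({s, c0} : Finset (Fin n → SignType)),
            (∏ j, hF (v j) (t j) (s j)) * x v := by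
      refine (Finset.sum_subset (Finset.subset_univ _) ?_).symm
      intro v _ hv
      simp only [Finset.mem_insert, Finset.mem_singleton, not_or] at hv
      obtain ⟨hvs, hv0⟩ := hv
      by_cases hall : ∀ j, v j ≠ 0
      · -- v ≠ s, all entries nonzero: some factor is 0
        have : ∃ j, v j ≠ s j := by
          by_contra h
          push_neg at h
          exact hvs (funext h)
        obtain ⟨j, hj⟩ := this
        have : hF (v j) (t j) (s j) = 0 := by
          unfold hF
          rw [if_neg hj, if_neg (hall j)]
        rw [Finset.prod_eq_zero (Finset.mem_univ j) this, zero_mul]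
      · have : x v = 0 := by
          simp only [hx, if_neg hall, if_neg hv0]
        rw [this, mul_zero]
    rw [hsub, Finset.sum_pair hsne]
    have h1 : (∏ j, hF (s j) (t j) (s j)) * x s = (∏ j, ((t j : ℤ) : ℝ)) * ε s := by
      have hxs : x s = ε s := by simp only [hx, if_pos hs]
      rw [hxs]
      congr 1
      refine Finset.prod_congr rfl fun j _ => ?_
      unfold hF
      rw [if_pos rfl]
      norm_cast
    have h2 : (∏ j, hF (c0 j) (t j) (s j)) * x c0 = 1 := by
      have hxc : x c0 = 1 := by
        simp only [hx]
        rw [if_neg, if_pos trivial]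
        intro h
        exact h j0 rfl
      rw [hxc, mul_one]
      refine Finset.prod_eq_one fun j _ => ?_
      unfold hF
      rw [if_neg (fun h => hs j h.symm)]
      simp [hc0]
    rw [h1, h2]
  rw [key]
  have habs : |∏ j, ((t j : ℤ) : ℝ)| = 1 := by
    rw [Finset.abs_prod]
    refine Finset.prod_eq_one fun j _ => ?_
    have := ht j
    cases h : t j <;> simp_all
  rcases abs_eq (zero_le_one) |>.mp habs with h | h <;> rw [h] <;>
    have := hε s hs <;> linarith [this.1, this.2]
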